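/- The solution T(x) of the combinatorial Dyson–Schwinger equation T(x) = 1 + x·B₊(T(x)^{1+s}) can be written as T(x) = 1 + ∑_t pe(t)·(∏_{v∈V(t)} binom(1+s, deg⁺(v))) · t · x^{|t|}, where pe(t) is the number of plane embeddings of the rooted tree t; equivalently, for any rooted tree t, (∏_v (1+s)_{deg⁺(v)})/|Aut(t)| = pe(t)·∏_v binom(1+s, deg⁺(v)). -/

import Mathlib

/-- Plane rooted trees: a root with an ordered list of subtrees. -/
inductive PTree : Type
  | node : List PTree → PTree

namespace PTree

/-- Two plane rooted trees are equivalent (represent the same abstract rooted tree) if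
their lists of subtrees agree up to permutation and equivalence. -/
def Equiv : PTree → PTree → Prop
  | node l₁, node l₂ =>
      ∃ l₃ : List PTree, l₂.Perm l₃ ∧ l₁.length = l₃.length ∧
        ∀ p, ∀ _ : p ∈ l₁.zip l₃, Equiv p.1 p.2
termination_by t₁ _ => sizeOf t₁
decreasing_by
  have h1 := (List.of_mem_zip ‹_›).1
  have := List.sizeOf_lt_of_mem h1
  simp only [node.sizeOf_spec]
  omega

/-- The number of vertices of a plane rooted tree. -/
def size : PTree → ℕ
  | node l => 1 + (l.attach.map fun c => size c.1).sum
termination_by t => sizeOf t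
decreasing_by
  have := List.sizeOf_lt_of_mem c.2
  simp only [node.sizeOf_spec]
  omega

-- ### auxiliary development

lemma rel_coe_of_forall₂ {α β : Type*} {r : α → β → Prop} {l₁ : List α} {l₂ : List β}
    (h : List.Forall₂ r l₁ l₂) : Multiset.Rel r ↑l₁ ↑l₂ := by
  induction h with
  | nil => exact Multiset.Rel.zero
  | cons h _ ih => exact Multiset.Rel.cons h ih

lemma exists_forall₂_of_rel_coe {α β : Type*} {r : α → β → Prop} :
    ∀ {l₁ : List α} {l₂ : List β}, Multiset.Rel r ↑l₁ ↑l₂ →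
      ∃ l₃, l₂.Perm l₃ ∧ List.Forall₂ r l₁ l₃ := by
  intro l₁
  induction l₁ with
  | nil =>
    intro l₂ h
    have : (l₂ : Multiset β) = 0 := Multiset.rel_zero_left.1 h
    rw [Multiset.coe_eq_zero] at this
    exact ⟨[], by simp [this], List.Forall₂.nil⟩
  | cons a t ih =>
    intro l₂ h
    rw [show ((a :: t : List α) : Multiset α) = a ::ₘ ↑t from rfl,
      Multiset.rel_cons_left] at h
    obtain ⟨b, bs, hab, hrel, hcons⟩ := h
    obtain ⟨lb, rfl⟩ := Quot.exists_rep bs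
    obtain ⟨l₃', hperm, hf⟩ := ih hrel
    refine ⟨b :: l₃', ?_, List.Forall₂.cons hab hf⟩
    have : (l₂ : Multiset β) = ↑(b :: lb) := by
      rw [hcons]; rfl
    exact (Multiset.coe_eq_coe.1 this).trans (hperm.cons b)

lemma equiv_node_iff {l₁ l₂ : List PTree} :
    Equiv (node l₁) (node l₂) ↔ Multiset.Rel Equiv ↑l₁ ↑l₂ := by
  rw [Equiv]
  constructor
  · rintro ⟨l₃, hperm, hlen, hzip⟩
    have hf : List.Forall₂ Equiv l₁ l₃ :=
      List.forall₂_iff_zip.2 ⟨hlen, fun h => hzip _ h⟩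
    have h2 : (l₂ : Multiset PTree) = ↑l₃ := Multiset.coe_eq_coe.2 hperm
    rw [h2]
    exact rel_coe_of_forall₂ hf
  · intro h
    obtain ⟨l₃, hperm, hf⟩ := exists_forall₂_of_rel_coe h
    exact ⟨l₃, hperm, hf.length_eq, fun p hp => List.forall₂_zip hf hp⟩

theorem equiv_refl : ∀ p : PTree, Equiv p p
  | node l => equiv_node_iff.2 (Multiset.rel_refl_of_refl_on fun x hx => equiv_refl x)
termination_by p => sizeOf p
decreasing_by
  have := List.sizeOf_lt_of_mem (Multiset.mem_coe.1 hx)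
  simp only [node.sizeOf_spec]
  omega

theorem equiv_symm : ∀ p q : PTree, Equiv p q → Equiv q p
  | node a, node b, h => by
    rw [equiv_node_iff] at h ⊢
    rw [← Multiset.rel_flip]
    exact h.mono fun x hx y _ hxy => equiv_symm x y hxy
termination_by p => sizeOf p
decreasing_by
  have := List.sizeOf_lt_of_mem (Multiset.mem_coe.1 hx)
  simp only [node.sizeOf_spec]
  omega

lemma rel_trans_on {α : Type*} {r : α → α → Prop} {s t : Multiset α}
    (h1 : Multiset.Rel r s t) :
    ∀ {u : Multiset α}, Multiset.Rel r t u →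
      (∀ x ∈ s, ∀ y z, r x y → r y z → r x z) → Multiset.Rel r s u := by
  induction h1 with
  | zero =>
    intro u h2 _
    rw [Multiset.rel_zero_left.1 h2]
    exact Multiset.Rel.zero
  | @cons a b as bs hab _ ih =>
    intro u h2 H
    rw [Multiset.rel_cons_left] at h2
    obtain ⟨c, u', hbc, h2', rfl⟩ := h2
    exact Multiset.Rel.cons (H a (Multiset.mem_cons_self _ _) _ _ hab hbc)
      (ih h2' fun x hx => H x (Multiset.mem_cons_of_mem hx))

theorem equiv_trans : ∀ p q r : PTree, Equiv p q → Equiv q r → Equiv p r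
  | node a, node b, node c, h1, h2 => by
    rw [equiv_node_iff] at h1 h2 ⊢
    exact rel_trans_on h1 h2 fun x hx y z => equiv_trans x y z
termination_by p => sizeOf p
decreasing_by
  have := List.sizeOf_lt_of_mem (Multiset.mem_coe.1 hx)
  simp only [node.sizeOf_spec]
  omega

theorem equiv_equivalence : Equivalence Equiv :=
  ⟨equiv_refl, fun h => equiv_symm _ _ h, fun h h' => equiv_trans _ _ _ h h'⟩

theorem mk_eq_mk_iff {p q : PTree} :
    Quot.mk Equiv p = Quot.mk Equiv q ↔ Equiv p q :=
  Quot.eq.trans equiv_equivalence.eqvGen_iff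

end PTree
/-- Abstract (non-plane) rooted trees: plane rooted trees up to equivalence. -/
def RTree : Type := Quot PTree.Equiv

/-- The number of vertices of a rooted tree. -/
noncomputable def RTree.size (t : RTree) : ℕ := (Quot.out t).size

/-- The falling factorial `α(α-1)⋯(α-k+1)` in a commutative ring. -/
def fallFac {K : Type*} [CommRing K] (α : K) : ℕ → K
  | 0 => 1
  | k + 1 => fallFac α k * (α - (k : K))

/-- The generalized binomial coefficient `binom(α, k) = α(α-1)⋯(α-k+1)/k!`. -/
noncomputable def genBinom {K : Type*} [CommRing K] [Algebra ℚ K] (α : K) (k : ℕ) : K :=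
  (k.factorial : ℚ)⁻¹ • fallFac α k

namespace PTree

/-- `∏_{v ∈ V(t)} (α)_{deg⁺(v)}`: the product over the vertices of the falling factorial
of `α` in the number of children. -/
def fallProd {K : Type*} [CommRing K] (α : K) : PTree → K
  | node l => fallFac α l.length * (l.attach.map fun c => fallProd α c.1).prod
termination_by t => sizeOf t
decreasing_by
  have := List.sizeOf_lt_of_mem c.2
  simp only [node.sizeOf_spec]
  omega

/-- `∏_{v ∈ V(t)} binom(α, deg⁺(v))`. -/
noncomputable def binomProd {K : Type*} [CommRing K] [Algebra ℚ K] (α : K) : PTree → K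
  | node l => genBinom α l.length * (l.attach.map fun c => binomProd α c.1).prod
termination_by t => sizeOf t
decreasing_by
  have := List.sizeOf_lt_of_mem c.2
  simp only [node.sizeOf_spec]
  omega

open scoped Classical in
/-- The order of the automorphism group of (the rooted tree underlying) a plane rooted
tree: the product of the automorphism counts of the subtrees times the factorials of the
multiplicities of isomorphic subtrees. -/
noncomputable def autCard : PTree → ℕ
  | node l =>
      (l.attach.map fun c => autCard c.1).prod *
        (let m : Multiset RTree := (l.map (Quot.mk PTree.Equiv) : List RTree)
         m.toFinset.prod fun t => (m.count t).factorial)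
termination_by t => sizeOf t
decreasing_by
  have := List.sizeOf_lt_of_mem c.2
  simp only [node.sizeOf_spec]
  omega

end PTree

/-- The number of plane embeddings of a rooted tree: the number of plane rooted trees
representing it. -/
noncomputable def RTree.peCount (t : RTree) : ℕ :=
  Nat.card {p : PTree // Quot.mk PTree.Equiv p = t}

/-- The rooted tree obtained from a forest (a finitely supported multiset of rooted
trees) by attaching a new root to the root of every component. -/
noncomputable def nodeOfForest (m : RTree →₀ ℕ) : RTree :=
  Quot.mk PTree.Equiv (PTree.node (((Finsupp.toMultiset m).map Quot.out).toList))

/-- The Connes–Kreimer Hopf algebra: the free commutative `K`-algebra on rooted trees,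
with forests (monomials) as a basis. -/
abbrev CKAlgebra (K : Type*) [CommRing K] := MvPolynomial RTree K

/-- The grafting operator `B₊`, sending each forest (monomial) to the tree obtained by
attaching a new root to all of its components. -/
noncomputable def Bplus {K : Type*} [CommRing K] (p : CKAlgebra K) : CKAlgebra K :=
  ∑ m ∈ p.support,
    MvPolynomial.monomial (Finsupp.single (nodeOfForest m) 1) (MvPolynomial.coeff m p)

/-- `(1 + U)^α` for a power series `U` (sensible when `U` has zero constant term),
defined via the generalized binomial series. -/
noncomputable def onePlusPow {K : Type*} [CommRing K] [Algebra ℚ K]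
    (α : K) (U : PowerSeries (CKAlgebra K)) : PowerSeries (CKAlgebra K) :=
  PowerSeries.mk fun n =>
    ∑ k ∈ Finset.range (n + 1),
      genBinom α k • PowerSeries.coeff (R := CKAlgebra K) n (U ^ k)

/-- The combinatorial Dyson--Schwinger equation `T(x) = 1 + x·B₊(T(x)^{1+s})`. -/
noncomputable def SolvesDSE {K : Type*} [CommRing K] [Algebra ℚ K] (s : K)
    (T : PowerSeries (CKAlgebra K)) : Prop :=
  T = 1 + PowerSeries.X *
    PowerSeries.mk fun n =>
      Bplus (PowerSeries.coeff (R := CKAlgebra K) n (onePlusPow (1 + s) (T - 1)))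

/-- The contribution `(∏_{v∈V(t)} (1+s)_{deg⁺ v}) ⬝ t / |Aut(t)|` of a rooted tree. -/
noncomputable def treeTerm {K : Type*} [CommRing K] [Algebra ℚ K] (s : K)
    (t : RTree) : CKAlgebra K :=
  ((((Quot.out t).autCard : ℚ)⁻¹ • (Quot.out t).fallProd (1 + s)) : K) •
    (MvPolynomial.X t : CKAlgebra K)

/-- The explicit solution `1 + ∑_t (∏_v (1+s)_{deg⁺ v}) ⬝ t ⬝ x^{|t|} / |Aut(t)|` of the
combinatorial Dyson--Schwinger equation. -/
noncomputable def dseSolution {K : Type*} [CommRing K] [Algebra ℚ K] (s : K) :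
    PowerSeries (CKAlgebra K) :=
  PowerSeries.mk fun n =>
    if n = 0 then 1 else ∑ᶠ t ∈ {t : RTree | t.size = n}, treeTerm s t

attribute [reducible] RTree

namespace PTree

/-- `∏_{v∈V(t)} (deg⁺ v)!`. -/
def degProd : PTree → ℕ
  | node l => l.length.factorial * (l.attach.map fun c => degProd c.1).prod
termination_by t => sizeOf t
decreasing_by
  have := List.sizeOf_lt_of_mem c.2
  simp only [node.sizeOf_spec]
  omega

lemma degProd_pos : ∀ p : PTree, 0 < degProd p
  | node l => by
    rw [degProd]
    refine Nat.mul_pos (Nat.factorial_pos _) (List.prod_pos ?_)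
    intro x hx
    simp only [List.mem_map] at hx
    obtain ⟨c, hc, rfl⟩ := hx
    exact degProd_pos c.1
termination_by p => sizeOf p
decreasing_by
  have := List.sizeOf_lt_of_mem c.2
  simp only [node.sizeOf_spec]
  omega

lemma autCard_pos : ∀ p : PTree, 0 < autCard p
  | node l => by
    rw [autCard]
    refine Nat.mul_pos (List.prod_pos ?_) (Finset.prod_pos ?_)
    · intro x hx
      simp only [List.mem_map] at hx
      obtain ⟨c, hc, rfl⟩ := hx
      exact autCard_pos c.1
    · exact fun t _ => Nat.factorial_pos _
termination_by p => sizeOf p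
decreasing_by
  have := List.sizeOf_lt_of_mem c.2
  simp only [node.sizeOf_spec]
  omega

lemma list_prod_inv (l : List ℚ) : (l.prod)⁻¹ = (l.map fun x => x⁻¹).prod := by
  induction l with
  | nil => simp
  | cons a t ih => simp [mul_inv, ih, mul_comm]

lemma list_prod_smul {K : Type*} [CommRing K] [Algebra ℚ K] {β : Type*}
    (l : List β) (a : β → ℚ) (f : β → K) :
    (l.map fun x => a x • f x).prod = (l.map a).prod • (l.map f).prod := by
  induction l with
  | nil => simp
  | cons x t ih => simp [ih, smul_smul, mul_comm]

lemma binomProd_eq {K : Type*} [CommRing K] [Algebra ℚ K] (α : K) :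
    ∀ p : PTree, binomProd α p = ((degProd p : ℚ))⁻¹ • fallProd α p
  | node l => by
    rw [binomProd, degProd, fallProd, genBinom]
    rw [List.map_congr_left (g := fun c : {x // x ∈ l} =>
      ((degProd c.1 : ℚ))⁻¹ • fallProd α c.1) (fun c _ => binomProd_eq α c.1)]
    rw [list_prod_smul]
    rw [smul_mul_smul_comm]
    congr 1
    push_cast
    rw [mul_inv, list_prod_inv, List.map_map, List.map_map]
    rfl
termination_by p => sizeOf p
decreasing_by
  have := List.sizeOf_lt_of_mem c.2
  simp only [node.sizeOf_spec]
  omega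

end PTree

namespace PTree

/-- The children of the root. -/
def children : PTree → List PTree
  | node l => l

@[simp] lemma node_children : ∀ q : PTree, node (children q) = q
  | node _ => rfl

lemma rel_exists_mem {α β : Type*} {r : α → β → Prop} {s : Multiset α} {t : Multiset β}
    (h : Multiset.Rel r s t) : ∀ a ∈ s, ∃ b ∈ t, r a b := by
  induction h with
  | zero => simp
  | @cons x y as bs hxy _ ih =>
    intro a ha
    rw [Multiset.mem_cons] at ha
    rcases ha with rfl | ha
    · exact ⟨y, Multiset.mem_cons_self _ _, hxy⟩
    · obtain ⟨b, hb, hr⟩ := ih a ha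
      exact ⟨b, Multiset.mem_cons_of_mem hb, hr⟩

lemma children_length_eq {q : PTree} {l : List PTree} (h : Equiv q (node l)) :
    (children q).length = l.length := by
  cases q with
  | node m =>
    rw [equiv_node_iff] at h
    have := Multiset.card_eq_card_of_rel h
    simpa [children] using this

lemma children_mem_of_equiv {q : PTree} {l : List PTree} (h : Equiv q (node l))
    {x : PTree} (hx : x ∈ children q) : ∃ a ∈ l, Equiv x a := by
  cases q with
  | node m =>
    rw [equiv_node_iff] at h
    obtain ⟨b, hb, hr⟩ := rel_exists_mem h x (Multiset.mem_coe.2 hx)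
    exact ⟨b, Multiset.mem_coe.1 hb, hr⟩

theorem finite_equiv : ∀ p : PTree, Finite {q : PTree // Equiv q p}
  | node l => by
    have hS : {q : PTree | ∃ a ∈ l, Equiv q a}.Finite := by
      have he : {q : PTree | ∃ a ∈ l, Equiv q a} = ⋃ a ∈ l, {q | Equiv q a} := by
        ext x; simp
      rw [he]
      exact Set.Finite.biUnion (List.finite_toSet l)
        fun a _ => Set.finite_coe_iff.1 (finite_equiv a)
    haveI : Finite {q : PTree | ∃ a ∈ l, Equiv q a} := hS.to_subtype
    set σ := {q : PTree // ∃ a ∈ l, Equiv q a}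
    haveI : Finite σ := hS.to_subtype
    haveI : Fintype σ := Fintype.ofFinite σ
    refine Finite.of_injective (β := Fin l.length → Option σ)
      (fun x i => if h : i.1 < (children x.1).length then
        some ⟨(children x.1).get ⟨i.1, h⟩,
          children_mem_of_equiv x.2 (List.get_mem _ _)⟩ else none) ?_
    rintro ⟨q₁, h₁⟩ ⟨q₂, h₂⟩ hF
    have hl₁ : (children q₁).length = l.length := children_length_eq h₁
    have hl₂ : (children q₂).length = l.length := children_length_eq h₂
    have hc : children q₁ = children q₂ := by
      apply List.ext_get (hl₁.trans hl₂.symm)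
      intro i hi₁ hi₂
      have hFi := congrFun hF ⟨i, hl₁ ▸ hi₁⟩
      simp only [hi₁, hi₂, dif_pos] at hFi
      exact Subtype.mk.injEq .. ▸ (Option.some.injEq _ _ ▸ hFi :)
    have : node (children q₁) = node (children q₂) := by rw [hc]
    simpa using this
termination_by p => sizeOf p
decreasing_by
  have := List.sizeOf_lt_of_mem ‹a ∈ l›
  simp only [node.sizeOf_spec]
  omega

end PTree

namespace PTree

/-- The number of lists of plane trees whose multiset of classes is `M`. -/
noncomputable def listCount (M : Multiset RTree) : ℕ :=
  Nat.card {m : List PTree // ((m.map (Quot.mk Equiv) : List RTree) : Multiset RTree) = M}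

instance listCount_unique :
    Unique {m : List PTree // ((m.map (Quot.mk Equiv) : List RTree) : Multiset RTree) = 0} where
  default := ⟨[], by simp⟩
  uniq := by
    rintro ⟨m, hm⟩
    exact Subtype.ext (by simpa [Multiset.coe_eq_zero, List.map_eq_nil_iff] using hm)

lemma listCount_zero : listCount 0 = 1 := Nat.card_unique

lemma finite_fiber_of_equiv (c : PTree) :
    Finite {p : PTree // Quot.mk Equiv p = Quot.mk Equiv c} := by
  have e : {p : PTree // Quot.mk Equiv p = Quot.mk Equiv c} ≃ {p : PTree // Equiv p c} :=
    Equiv.subtypeEquivRight fun q => mk_eq_mk_iff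
  haveI := finite_equiv c
  exact Finite.of_equiv _ e.symm

lemma finite_lists (M : Multiset RTree)
    (hfin : ∀ t ∈ M, Finite {p : PTree // Quot.mk Equiv p = t}) :
    Finite {m : List PTree // ((m.map (Quot.mk Equiv) : List RTree) : Multiset RTree) = M} := by
  classical
  have hS : {p : PTree | Quot.mk Equiv p ∈ M}.Finite := by
    have he : {p : PTree | Quot.mk Equiv p ∈ M} = ⋃ t ∈ M.toFinset, {p | Quot.mk Equiv p = t} := by
      ext x
      constructor
      · intro hx
        exact Set.mem_iUnion₂.2 ⟨_, Multiset.mem_toFinset.2 hx,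
          (show Quot.mk Equiv x = Quot.mk Equiv x from rfl)⟩
      · intro hx
        obtain ⟨t, ht, hxt⟩ := Set.mem_iUnion₂.1 hx
        have hxt' : Quot.mk Equiv x = t := hxt
        show Quot.mk Equiv x ∈ M
        rw [hxt']
        exact Multiset.mem_toFinset.1 ht
    rw [he]
    exact Set.Finite.biUnion M.toFinset.finite_toSet
      fun t ht => Set.finite_coe_iff.1 (hfin t (Multiset.mem_toFinset.1 ht))
  set σ := {p : PTree // Quot.mk Equiv p ∈ M}
  haveI : Finite σ := hS.to_subtype
  haveI : Fintype σ := Fintype.ofFinite σ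
  refine Finite.of_injective (β := Fin (Multiset.card M) → Option σ)
    (fun x i => if h : i.1 < x.1.length then
      some ⟨x.1.get ⟨i.1, h⟩, by
        have hmem : Quot.mk Equiv (x.1.get ⟨i.1, h⟩) ∈
            ((x.1.map (Quot.mk Equiv) : List RTree) : Multiset RTree) :=
          Multiset.mem_coe.2 (List.mem_map_of_mem (List.get_mem _ _))
        rw [x.2] at hmem
        exact hmem⟩
      else none) ?_
  rintro ⟨m₁, h₁⟩ ⟨m₂, h₂⟩ hF
  have hl₁ : m₁.length = Multiset.card M := by
    have := congrArg Multiset.card h₁; simpa using this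
  have hl₂ : m₂.length = Multiset.card M := by
    have := congrArg Multiset.card h₂; simpa using this
  apply Subtype.ext
  apply List.ext_get (hl₁.trans hl₂.symm)
  intro i hi₁ hi₂
  have hFi := congrFun hF ⟨i, hl₁ ▸ hi₁⟩
  simp only [hi₁, hi₂, dif_pos] at hFi
  exact Subtype.mk.injEq .. ▸ (Option.some.injEq _ _ ▸ hFi :)

open scoped Classical in
/-- Peeling the first element of a list with given class multiset. -/
noncomputable def peel (M : Multiset RTree) (hM : M ≠ 0) :
    {m : List PTree // ((m.map (Quot.mk Equiv) : List RTree) : Multiset RTree) = M} ≃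
      Σ t : M.toFinset, {p : PTree // Quot.mk Equiv p = t.1} ×
        {m' : List PTree // ((m'.map (Quot.mk Equiv) : List RTree) : Multiset RTree) = M.erase t.1} where
  toFun x :=
    match x with
    | ⟨[], h⟩ => absurd h.symm (by simpa using hM)
    | ⟨a :: m', h⟩ =>
        ⟨⟨Quot.mk Equiv a, by
            rw [Multiset.mem_toFinset, ← h, List.map_cons, ← Multiset.cons_coe]
            exact Multiset.mem_cons_self _ _⟩,
          ⟨a, rfl⟩,
          ⟨m', by
            show ((m'.map (Quot.mk Equiv) : List RTree) : Multiset RTree)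
              = M.erase (Quot.mk Equiv a)
            rw [← h, List.map_cons, ← Multiset.cons_coe, Multiset.erase_cons_head]⟩⟩
  invFun y := ⟨y.2.1.1 :: y.2.2.1, by
    have h1 : ((((y.2.1.1 :: y.2.2.1 : List PTree)).map (Quot.mk Equiv) : List RTree) : Multiset RTree)
        = Quot.mk Equiv y.2.1.1 ::ₘ ((y.2.2.1.map (Quot.mk Equiv) : List RTree) : Multiset RTree) := rfl
    rw [h1, y.2.2.2, y.2.1.2]
    exact Multiset.cons_erase (Multiset.mem_toFinset.1 y.1.2)⟩
  left_inv := by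
    rintro ⟨(_ | ⟨a, m'⟩), h⟩
    · exact absurd h.symm (by simpa using hM)
    · rfl
  right_inv := by
    rintro ⟨⟨t, ht⟩, ⟨p, hp⟩, ⟨m', hm'⟩⟩
    have hp' : Quot.mk Equiv p = t := hp
    subst hp'
    rfl

lemma nat_card_sigma {ι : Type*} (s : Finset ι) (F : ι → Type*)
    (hf : ∀ i ∈ s, Finite (F i)) :
    Nat.card (Σ t : s, F t.1) = ∑ i ∈ s, Nat.card (F i) := by
  classical
  haveI : ∀ t : s, Fintype (F t.1) := fun t => @Fintype.ofFinite _ (hf t.1 t.2)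
  rw [Nat.card_eq_fintype_card, Fintype.card_sigma]
  have h2 : ∑ i ∈ s, Nat.card (F i) = ∑ t : s, Nat.card (F t.1) :=
    (Finset.sum_coe_sort s fun i => Nat.card (F i)).symm
  rw [h2]
  exact Finset.sum_congr rfl fun t _ => by rw [Nat.card_eq_fintype_card]

open scoped Classical in
lemma listCount_rec (M : Multiset RTree) (hM : M ≠ 0)
    (hfin : ∀ t ∈ M, Finite {p : PTree // Quot.mk Equiv p = t}) :
    listCount M = ∑ t ∈ M.toFinset, t.peCount * listCount (M.erase t) := by
  haveI : ∀ t : M.toFinset, Finite {p : PTree // Quot.mk Equiv p = t.1} :=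
    fun t => hfin t.1 (Multiset.mem_toFinset.1 t.2)
  haveI : ∀ t : M.toFinset, Finite
      {m' : List PTree // ((m'.map (Quot.mk Equiv) : List RTree) : Multiset RTree) = M.erase t.1} :=
    fun t => finite_lists _ fun s hs => hfin s (Multiset.mem_of_mem_erase hs)
  rw [listCount, Nat.card_congr (peel M hM)]
  rw [nat_card_sigma M.toFinset
    (fun t => {p : PTree // Quot.mk Equiv p = t} ×
      {m' : List PTree // ((m'.map (Quot.mk Equiv) : List RTree) : Multiset RTree) = M.erase t})
    (fun t ht => by
      haveI : Finite {p : PTree // Quot.mk Equiv p = t} := hfin t (Multiset.mem_toFinset.1 ht)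
      haveI : Finite {m' : List PTree //
          ((m'.map (Quot.mk Equiv) : List RTree) : Multiset RTree) = M.erase t} :=
        finite_lists _ fun s hs => hfin s (Multiset.mem_of_mem_erase hs)
      infer_instance)]
  exact Finset.sum_congr rfl fun t _ => Nat.card_prod _ _

open scoped Classical in
lemma prod_factorial_count_erase {M : Multiset RTree} {t : RTree} (ht : t ∈ M) :
    ∏ s ∈ M.toFinset, (M.count s).factorial =
      M.count t * ∏ s ∈ (M.erase t).toFinset, ((M.erase t).count s).factorial := by
  have hsub : (M.erase t).toFinset ⊆ M.toFinset :=
    Multiset.toFinset_subset.2 fun x hx => Multiset.mem_of_mem_erase hx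
  have h1 : ∏ s ∈ (M.erase t).toFinset, ((M.erase t).count s).factorial =
      ∏ s ∈ M.toFinset, ((M.erase t).count s).factorial := by
    refine Finset.prod_subset hsub fun x hx hx' => ?_
    have : (M.erase t).count x = 0 :=
      Multiset.count_eq_zero.2 fun hmem => hx' (Multiset.mem_toFinset.2 hmem)
    simp [this]
  rw [h1]
  have htf : t ∈ M.toFinset := Multiset.mem_toFinset.2 ht
  rw [← Finset.mul_prod_erase M.toFinset (fun s => (M.count s).factorial) htf,
    ← Finset.mul_prod_erase M.toFinset (fun s => ((M.erase t).count s).factorial) htf,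
    ← mul_assoc]
  have h2 : ∏ s ∈ M.toFinset.erase t, (M.count s).factorial =
      ∏ s ∈ M.toFinset.erase t, ((M.erase t).count s).factorial := by
    refine Finset.prod_congr rfl fun s hs => ?_
    rw [Multiset.count_erase_of_ne (Finset.ne_of_mem_erase hs)]
  rw [h2]
  congr 1
  rw [Multiset.count_erase_self]
  have hpos : 0 < M.count t := Multiset.count_pos.2 ht
  rw [← Nat.mul_factorial_pred hpos.ne']

open scoped Classical in
theorem listCount_mul (M : Multiset RTree)
    (hfin : ∀ t ∈ M, Finite {p : PTree // Quot.mk Equiv p = t}) :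
    listCount M * ∏ t ∈ M.toFinset, (M.count t).factorial =
      (Multiset.card M).factorial * (M.map RTree.peCount).prod := by
  induction M using Multiset.strongInductionOn with
  | ih M ih =>
    rcases eq_or_ne M 0 with rfl | hM
    · simp [listCount_zero]
    · rw [listCount_rec M hM hfin, Finset.sum_mul]
      have key : ∀ t ∈ M.toFinset,
          t.peCount * listCount (M.erase t) * ∏ s ∈ M.toFinset, (M.count s).factorial =
            M.count t * ((Multiset.card M - 1).factorial * (M.map RTree.peCount).prod) := by
        intro t ht
        have htM : t ∈ M := Multiset.mem_toFinset.1 ht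
        have hlt : M.erase t < M := Multiset.erase_lt.2 htM
        have hIH := ih (M.erase t) hlt fun s hs => hfin s (Multiset.mem_of_mem_erase hs)
        rw [prod_factorial_count_erase htM]
        calc t.peCount * listCount (M.erase t) *
              (M.count t * ∏ s ∈ (M.erase t).toFinset, ((M.erase t).count s).factorial)
            = M.count t * (listCount (M.erase t) *
                ∏ s ∈ (M.erase t).toFinset, ((M.erase t).count s).factorial) * t.peCount := by
              ring
          _ = M.count t * ((Multiset.card (M.erase t)).factorial *
                ((M.erase t).map RTree.peCount).prod) * t.peCount := by rw [hIH]
          _ = M.count t * ((Multiset.card M - 1).factorial *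
                (t.peCount * ((M.erase t).map RTree.peCount).prod)) := by
              rw [Multiset.card_erase_of_mem htM, Nat.pred_eq_sub_one]
              ring
          _ = M.count t * ((Multiset.card M - 1).factorial * (M.map RTree.peCount).prod) := by
              rw [Multiset.prod_map_erase htM]
      rw [Finset.sum_congr rfl key, ← Finset.sum_mul, Multiset.toFinset_sum_count_eq]
      have hpos : 0 < Multiset.card M := Multiset.card_pos.2 hM
      rw [← mul_assoc, Nat.mul_factorial_pred hpos.ne']

end PTree

namespace PTree

lemma rel_iff_map_eq {s t : Multiset PTree} :
    Multiset.Rel Equiv s t ↔ s.map (Quot.mk Equiv) = t.map (Quot.mk Equiv) := by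
  rw [← Multiset.rel_eq, Multiset.rel_map]
  constructor
  · exact fun h => h.mono fun a _ b _ hab => mk_eq_mk_iff.2 hab
  · exact fun h => h.mono fun a _ b _ hab => mk_eq_mk_iff.1 hab

/-- Plane trees equivalent to `node l` correspond to lists with the same class multiset. -/
def equivLists (l : List PTree) :
    {q : PTree // Equiv q (node l)} ≃
      {m : List PTree // ((m.map (Quot.mk Equiv) : List RTree) : Multiset RTree)
        = ((l.map (Quot.mk Equiv) : List RTree) : Multiset RTree)} where
  toFun x :=
    match x with
    | ⟨node m, hq⟩ => ⟨m, by
        rw [equiv_node_iff, rel_iff_map_eq] at hq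
        simpa [Multiset.map_coe] using hq⟩
  invFun m := ⟨node m.1, by
    rw [equiv_node_iff, rel_iff_map_eq]
    simpa [Multiset.map_coe] using m.2⟩
  left_inv := by rintro ⟨⟨m⟩, h⟩; rfl
  right_inv := by rintro ⟨m, h⟩; rfl

open scoped Classical in
lemma autCard_node (l : List PTree) :
    autCard (node l) = (l.map autCard).prod *
      ∏ t ∈ ((l.map (Quot.mk Equiv) : List RTree) : Multiset RTree).toFinset,
        (((l.map (Quot.mk Equiv) : List RTree) : Multiset RTree).count t).factorial := by
  rw [autCard]
  dsimp only
  rw [List.attach_map_val]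

lemma degProd_node (l : List PTree) :
    degProd (node l) = l.length.factorial * (l.map degProd).prod := by
  rw [degProd, List.attach_map_val]

theorem pe_mul_aut : ∀ p : PTree, RTree.peCount (Quot.mk Equiv p) * autCard p = degProd p
  | node l => by
    classical
    set M := ((l.map (Quot.mk Equiv) : List RTree) : Multiset RTree) with hMdef
    have h1 : RTree.peCount (Quot.mk Equiv (node l)) = listCount M := by
      unfold RTree.peCount listCount
      exact Nat.card_congr
        ((_root_.Equiv.subtypeEquivRight fun q => mk_eq_mk_iff).trans (equivLists l))
    have hfin : ∀ t ∈ M, Finite {p : PTree // Quot.mk Equiv p = t} := by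
      intro t ht
      rw [hMdef, Multiset.mem_coe, List.mem_map] at ht
      obtain ⟨c, hc, rfl⟩ := ht
      exact finite_fiber_of_equiv c
    have h2 := listCount_mul M hfin
    have hcard : Multiset.card M = l.length := by
      rw [hMdef, Multiset.coe_card, List.length_map]
    have hprodpe : (M.map RTree.peCount).prod =
        (l.map fun c => RTree.peCount (Quot.mk Equiv c)).prod := by
      rw [hMdef, Multiset.map_coe, Multiset.prod_coe, List.map_map]
      rfl
    rw [h1, autCard_node, degProd_node]
    calc listCount M * ((l.map autCard).prod * ∏ t ∈ M.toFinset, (M.count t).factorial)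
        = (listCount M * ∏ t ∈ M.toFinset, (M.count t).factorial) * (l.map autCard).prod := by
          ring
      _ = (Multiset.card M).factorial * (M.map RTree.peCount).prod * (l.map autCard).prod := by
          rw [h2]
      _ = l.length.factorial *
            ((l.map fun c => RTree.peCount (Quot.mk Equiv c)).prod * (l.map autCard).prod) := by
          rw [hcard, hprodpe]; ring
      _ = l.length.factorial *
            (l.map fun c => RTree.peCount (Quot.mk Equiv c) * autCard c).prod := by
          rw [List.prod_map_mul]
      _ = l.length.factorial * (l.map degProd).prod := by
          rw [List.map_congr_left (fun c _ => pe_mul_aut c)]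
termination_by p => sizeOf p
decreasing_by
  have := List.sizeOf_lt_of_mem ‹c ∈ l›
  simp only [node.sizeOf_spec]
  omega

end PTree

theorem dse_solution_plane_form' {K : Type*} [CommRing K] [Algebra ℚ K] (s : K)
    (t : RTree) :
    (((Quot.out t).autCard : ℚ)⁻¹ • (Quot.out t).fallProd (1 + s) : K) =
      t.peCount • ((Quot.out t).binomProd (1 + s) : K) := by
  set p := Quot.out t with hpdef
  have hpe : t.peCount = RTree.peCount (Quot.mk PTree.Equiv p) := by
    rw [hpdef, Quot.out_eq]
  have hA := PTree.pe_mul_aut p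
  have hB := PTree.binomProd_eq (1 + s) p
  rw [hB, ← Nat.cast_smul_eq_nsmul ℚ t.peCount, smul_smul]
  congr 1
  have haut : (PTree.autCard p : ℚ) ≠ 0 := Nat.cast_ne_zero.2 (PTree.autCard_pos p).ne'
  have hdeg : (PTree.degProd p : ℚ) ≠ 0 := Nat.cast_ne_zero.2 (PTree.degProd_pos p).ne'
  have hAq : (RTree.peCount (Quot.mk PTree.Equiv p) : ℚ) * (PTree.autCard p : ℚ)
      = (PTree.degProd p : ℚ) := by exact_mod_cast hA
  rw [hpe]
  field_simp
  linear_combination -hAq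

/-- The plane-tree form of the solution of the combinatorial Dyson--Schwinger equation:
for every rooted tree `t`,
`(∏_{v∈V(t)} (1+s)_{deg⁺ v}) / |Aut(t)| = pe(t) ⬝ ∏_{v∈V(t)} binom(1+s, deg⁺ v)`,
where `pe(t)` is the number of plane embeddings of `t`.  Hence the solution can be
written as `T(x) = 1 + ∑_t pe(t) (∏_v binom(1+s, deg⁺ v)) ⬝ t ⬝ x^{|t|}`. -/
theorem dse_solution_plane_form {K : Type*} [CommRing K] [Algebra ℚ K] (s : K)
    (t : RTree) :
    (((Quot.out t).autCard : ℚ)⁻¹ • (Quot.out t).fallProd (1 + s) : K) =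
      t.peCount • ((Quot.out t).binomProd (1 + s) : K) := by
  exact dse_solution_plane_form' s t
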